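/- Let Δ be a simplicial complex on [n], 1 ≤ i < j ≤ n, Γ = Shift_{ij}(Δ), and W ⊂ [n]∖{i,j}. Set Δ_1 = Δ_{W∪{i}}, Δ_2 = Δ_{W∪{j}}, Γ_1 = Γ_{W∪{i}}, Γ_2 = Γ_{W∪{j}}. Then for all k one has dim_K(H̃_k(Δ_1;K) ⊕ H̃_k(Δ_2;K)) ≤ dim_K(H̃_k(Γ_1;K) ⊕ H̃_k(Γ_2;K)). -/

import Mathlib

/-- A simplicial complex on `[n]`, modeled as a set of finsets of `Fin n`. -/
def IsSimplicialComplex {n : ℕ} (Δ : Set (Finset (Fin n))) : Prop :=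
  (∀ j : Fin n, {j} ∈ Δ) ∧ ∀ σ ∈ Δ, ∀ τ : Finset (Fin n), τ ⊆ σ → τ ∈ Δ

/-- A collection of faces is closed under passing to subsets. -/
def DownClosed {n : ℕ} (Δ : Set (Finset (Fin n))) : Prop :=
  ∀ σ ∈ Δ, ∀ τ : Finset (Fin n), τ ⊆ σ → τ ∈ Δ

open Classical in
/-- `C_{ij}(σ)`, the basic combinatorial shifting operation on a single face. -/
noncomputable def shiftFace {n : ℕ} (Δ : Set (Finset (Fin n))) (i j : Fin n)
    (σ : Finset (Fin n)) : Finset (Fin n) :=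
  if i ∈ σ ∧ j ∉ σ ∧ insert j (σ.erase i) ∉ Δ then insert j (σ.erase i) else σ

/-- `Shift_{ij}(Δ)`. -/
noncomputable def shiftOp {n : ℕ} (Δ : Set (Finset (Fin n))) (i j : Fin n) :
    Set (Finset (Fin n)) :=
  (shiftFace Δ i j) '' Δ

/-- The induced subcomplex `Δ_W = {σ ∈ Δ : σ ⊆ W}`. -/
def restrictC {n : ℕ} (Δ : Set (Finset (Fin n))) (W : Finset (Fin n)) :
    Set (Finset (Fin n)) :=
  {σ | σ ∈ Δ ∧ σ ⊆ W}

/-- The space of simplicial `(c-1)`-chains of `Δ` with coefficients in `K`, spanned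
by the faces of `Δ` of cardinality `c` (including the empty face when `c = 0`,
which yields the *reduced* chain complex). -/
abbrev SimplicialChain (K : Type) [Field K] {n : ℕ} (Δ : Set (Finset (Fin n)))
    (c : ℕ) : Type :=
  {σ : Finset (Fin n) // σ ∈ Δ ∧ σ.card = c} → K

open Classical in
/-- The simplicial boundary map (from chains spanned by cardinality-`(c+1)` faces to
chains spanned by cardinality-`c` faces). -/
noncomputable def simplicialBoundary (K : Type) [Field K] {n : ℕ}
    (Δ : Set (Finset (Fin n))) (c : ℕ) :
    SimplicialChain K Δ (c + 1) →ₗ[K] SimplicialChain K Δ c where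
  toFun f τ := ∑ k : Fin n,
    if h : k ∉ τ.1 ∧ insert k τ.1 ∈ Δ then
      ((-1 : K) ^ ((τ.1.filter (fun l => l < k)).card)) •
        f ⟨insert k τ.1, h.2, by rw [Finset.card_insert_of_notMem h.1, τ.2.2]⟩
    else 0
  map_add' f g := by
    funext τ
    simp only [Pi.add_apply]
    rw [← Finset.sum_add_distrib]
    refine Finset.sum_congr rfl fun k _ => ?_
    split
    · simp only [Pi.add_apply, smul_add]
    · simp
  map_smul' a f := by
    funext τ
    simp only [Pi.smul_apply, RingHom.id_apply]
    rw [Finset.smul_sum]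
    refine Finset.sum_congr rfl fun k _ => ?_
    split
    · simp only [Pi.smul_apply, smul_comm a]
    · simp

/-- The space of (reduced) simplicial cycles in the chain space spanned by the
cardinality-`c` faces. -/
noncomputable def simplicialCycles (K : Type) [Field K] {n : ℕ}
    (Δ : Set (Finset (Fin n))) (c : ℕ) : Submodule K (SimplicialChain K Δ c) :=
  match c with
  | 0 => ⊤
  | (d + 1) => LinearMap.ker (simplicialBoundary K Δ d)

/-- The reduced simplicial homology `H̃_{c-1}(Δ; K)`: cycles modulo boundaries in the
chain space spanned by the cardinality-`c` faces of `Δ`. -/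
abbrev reducedHomology (K : Type) [Field K] {n : ℕ} (Δ : Set (Finset (Fin n)))
    (c : ℕ) : Type :=
  simplicialCycles K Δ c ⧸
    Submodule.comap (simplicialCycles K Δ c).subtype
      (LinearMap.range (simplicialBoundary K Δ c))

open Classical in
/-- The chain map induced by an inclusion of complexes `Δ' ⊆ Δ''` (extension by
zero of the dual-basis description; on faces it is the evident inclusion). -/
noncomputable def extendChain (K : Type) [Field K] {n : ℕ}
    {Δ' Δ'' : Set (Finset (Fin n))} (h : Δ' ⊆ Δ'') (c : ℕ) :
    SimplicialChain K Δ' c →ₗ[K] SimplicialChain K Δ'' c where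
  toFun f τ := if hτ : τ.1 ∈ Δ' then f ⟨τ.1, hτ, τ.2.2⟩ else 0
  map_add' f g := by
    funext τ
    by_cases hτ : τ.1 ∈ Δ' <;> simp [hτ]
  map_smul' a f := by
    funext τ
    by_cases hτ : τ.1 ∈ Δ' <;> simp [hτ]

theorem boundary_extendChain (K : Type) [Field K] {n : ℕ}
    {Δ' Δ'' : Set (Finset (Fin n))} (h : Δ' ⊆ Δ'') (hdc : DownClosed Δ') (c : ℕ)
    (f : SimplicialChain K Δ' (c + 1)) :
    simplicialBoundary K Δ'' c (extendChain K h (c + 1) f) =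
      extendChain K h c (simplicialBoundary K Δ' c f) := by
  funext τ
  simp only [simplicialBoundary, extendChain, LinearMap.coe_mk, AddHom.coe_mk]
  by_cases hτ : τ.1 ∈ Δ'
  · rw [dif_pos hτ]
    refine Finset.sum_congr rfl fun k _ => ?_
    by_cases hins : insert k τ.1 ∈ Δ'
    · have hins'' : insert k τ.1 ∈ Δ'' := h hins
      by_cases hk : k ∈ τ.1
      · rw [dif_neg (by tauto), dif_neg (by tauto)]
      · rw [dif_pos ⟨hk, hins''⟩, dif_pos hins, dif_pos ⟨hk, hins⟩]
    · by_cases hcond : k ∉ τ.1 ∧ insert k τ.1 ∈ Δ''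
      · rw [dif_pos hcond, dif_neg hins, smul_zero,
          dif_neg (show ¬(k ∉ τ.1 ∧ insert k τ.1 ∈ Δ') by tauto)]
      · rw [dif_neg hcond,
          dif_neg (show ¬(k ∉ τ.1 ∧ insert k τ.1 ∈ Δ') by tauto)]
  · rw [dif_neg hτ]
    refine Finset.sum_eq_zero fun k _ => ?_
    by_cases hcond : k ∉ τ.1 ∧ insert k τ.1 ∈ Δ''
    · rw [dif_pos hcond]
      have hnot : insert k τ.1 ∉ Δ' := fun hmem =>
        hτ (hdc _ hmem _ (Finset.subset_insert _ _))
      rw [dif_neg hnot, smul_zero]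
    · rw [dif_neg hcond]

theorem extend_mem_cycles (K : Type) [Field K] {n : ℕ}
    {Δ' Δ'' : Set (Finset (Fin n))} (h : Δ' ⊆ Δ'') (hdc : DownClosed Δ') (c : ℕ) :
    ∀ x ∈ simplicialCycles K Δ' c, extendChain K h c x ∈ simplicialCycles K Δ'' c := by
  intro x hx
  cases c with
  | zero => trivial
  | succ d =>
    have hx' : simplicialBoundary K Δ' d x = 0 := hx
    show simplicialBoundary K Δ'' d (extendChain K h (d + 1) x) = 0
    rw [boundary_extendChain K h hdc d x, hx', map_zero]

/-- The map `H̃_{c-1}(Δ'; K) → H̃_{c-1}(Δ''; K)` induced on reduced simplicial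
homology by an inclusion of complexes `Δ' ⊆ Δ''`. -/
noncomputable def inducedHomologyMap (K : Type) [Field K] {n : ℕ}
    {Δ' Δ'' : Set (Finset (Fin n))} (h : Δ' ⊆ Δ'') (hdc : DownClosed Δ') (c : ℕ) :
    reducedHomology K Δ' c →ₗ[K] reducedHomology K Δ'' c :=
  Submodule.mapQ _ _
    (LinearMap.restrict (extendChain K h c) (extend_mem_cycles K h hdc c))
    (by
      intro x hx
      simp only [Submodule.mem_comap, Submodule.coe_subtype, LinearMap.mem_range] at hx ⊢
      obtain ⟨u, hu⟩ := hx
      refine ⟨extendChain K h (c + 1) u, ?_⟩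
      have : (LinearMap.restrict (extendChain K h c)
          (extend_mem_cycles K h hdc c) x : SimplicialChain K Δ'' c) =
          extendChain K h c (x : SimplicialChain K Δ' c) := rfl
      rw [this, ← hu, boundary_extendChain K h hdc c u])

/-- The first map `H̃_k(Δ_W) → H̃_k(Δ_1) ⊕ H̃_k(Δ_2)`, `x ↦ (i_*(x), −j_*(x))`,
appearing in the reduced Mayer–Vietoris exact sequence (here `Δ_W = Δ_1 ∩ Δ_2`). -/
noncomputable def mayerVietorisMap (K : Type) [Field K] {n : ℕ}
    {ΔW Δ₁ Δ₂ : Set (Finset (Fin n))} (h₁ : ΔW ⊆ Δ₁) (h₂ : ΔW ⊆ Δ₂)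
    (hdc : DownClosed ΔW) (c : ℕ) :
    reducedHomology K ΔW c →ₗ[K]
      (reducedHomology K Δ₁ c) × (reducedHomology K Δ₂ c) :=
  LinearMap.prod (inducedHomologyMap K h₁ hdc c) (-(inducedHomologyMap K h₂ hdc c))


/-- Image of a set of finsets under a permutation of the vertices. -/
def mapC {n : ℕ} (e : Fin n ≃ Fin n) (S : Set (Finset (Fin n))) : Set (Finset (Fin n)) :=
  (fun σ => σ.map e.toEmbedding) '' S

lemma map_map_symm {n : ℕ} (e : Fin n ≃ Fin n) (σ : Finset (Fin n)) :
    (σ.map e.toEmbedding).map e.symm.toEmbedding = σ := by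
  ext a; simp [Finset.mem_map_equiv]

lemma map_symm_map {n : ℕ} (e : Fin n ≃ Fin n) (σ : Finset (Fin n)) :
    (σ.map e.symm.toEmbedding).map e.toEmbedding = σ := by
  ext a; simp [Finset.mem_map_equiv]

lemma mem_mapC {n : ℕ} (e : Fin n ≃ Fin n) (S : Set (Finset (Fin n))) (σ : Finset (Fin n)) :
    σ ∈ mapC e S ↔ σ.map e.symm.toEmbedding ∈ S := by
  constructor
  · rintro ⟨τ, hτ, rfl⟩; rwa [map_map_symm]
  · intro h; exact ⟨_, h, map_symm_map e σ⟩

/-- Number of inversions of a permutation on a finset. -/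
def invCount {n : ℕ} (e : Fin n ≃ Fin n) (σ : Finset (Fin n)) : ℕ :=
  ∑ a ∈ σ, ∑ b ∈ σ, if a < b ∧ e b < e a then 1 else 0

/-- The sign of a permutation restricted to a finset. -/
def sgn (K : Type) [Field K] {n : ℕ} (e : Fin n ≃ Fin n) (σ : Finset (Fin n)) : K :=
  (-1) ^ invCount e σ

lemma sgn_mul_self (K : Type) [Field K] {n : ℕ} (e : Fin n ≃ Fin n) (σ : Finset (Fin n)) :
    sgn K e σ * sgn K e σ = 1 := by
  rw [sgn, ← pow_add]
  exact Even.neg_one_pow ⟨invCount e σ, rfl⟩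

lemma sgn_symm (K : Type) [Field K] {n : ℕ} (e : Fin n ≃ Fin n) (σ : Finset (Fin n)) :
    sgn K e.symm (σ.map e.toEmbedding) = sgn K e σ := by
  unfold sgn invCount
  congr 1
  rw [Finset.sum_map]
  refine (Finset.sum_congr rfl fun a _ => Finset.sum_map σ e.toEmbedding _).trans ?_
  rw [Finset.sum_comm]
  refine Finset.sum_congr rfl fun a _ => Finset.sum_congr rfl fun b _ => ?_
  simp only [Equiv.coe_toEmbedding, Equiv.symm_apply_apply]
  congr 1
  simp [and_comm]

lemma sgn_insert (K : Type) [Field K] {n : ℕ} (e : Fin n ≃ Fin n) (σ : Finset (Fin n))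
    (m : Fin n) (hm : m ∉ σ) :
    sgn K e (insert m σ) = sgn K e σ * (-1) ^ (σ.filter (· < m)).card *
      (-1) ^ (σ.filter (fun l => e l < e m)).card := by
  have hins : invCount e (insert m σ) = invCount e σ +
      ((∑ b ∈ σ, if m < b ∧ e b < e m then 1 else 0) +
       (∑ a ∈ σ, if a < m ∧ e m < e a then 1 else 0)) := by
    unfold invCount
    rw [Finset.sum_insert hm]
    have h1 : ∑ b ∈ insert m σ, (if m < b ∧ e b < e m then 1 else 0) =
        ∑ b ∈ σ, if m < b ∧ e b < e m then 1 else 0 := by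
      rw [Finset.sum_insert hm]; simp
    have h2 : ∀ a ∈ σ, (∑ b ∈ insert m σ, if a < b ∧ e b < e a then (1:ℕ) else 0) =
        (if a < m ∧ e m < e a then 1 else 0) + ∑ b ∈ σ, if a < b ∧ e b < e a then 1 else 0 := by
      intro a _; rw [Finset.sum_insert hm]
    rw [h1, Finset.sum_congr rfl h2, Finset.sum_add_distrib]
    ring
  rw [sgn, hins, pow_add, ← sgn, mul_assoc]
  congr 1
  rw [pow_add, Finset.card_filter, Finset.card_filter, ← Finset.prod_pow_eq_pow_sum,
    ← Finset.prod_pow_eq_pow_sum, ← Finset.prod_pow_eq_pow_sum, ← Finset.prod_pow_eq_pow_sum,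
    ← Finset.prod_mul_distrib, ← Finset.prod_mul_distrib]
  refine Finset.prod_congr rfl fun l hl => ?_
  have hlm : l ≠ m := fun h => hm (h ▸ hl)
  have helm : e l ≠ e m := fun h => hlm (e.injective h)
  rcases lt_or_gt_of_ne hlm with h | h <;> rcases lt_or_gt_of_ne helm with h' | h' <;>
    simp [h, h', asymm h, asymm h', not_lt_of_gt h, not_lt_of_gt h']

open Classical in
/-- The sign-twisted chain isomorphism induced by a relabeling of vertices. -/
noncomputable def relChain (K : Type) [Field K] {n : ℕ} (e : Fin n ≃ Fin n)
    {S S' : Set (Finset (Fin n))}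
    (h : ∀ σ : Finset (Fin n), σ ∈ S' ↔ σ.map e.symm.toEmbedding ∈ S) (c : ℕ) :
    SimplicialChain K S c →ₗ[K] SimplicialChain K S' c where
  toFun f τ := sgn K e (τ.1.map e.symm.toEmbedding) *
    f ⟨τ.1.map e.symm.toEmbedding, (h τ.1).1 τ.2.1, by simp [τ.2.2]⟩
  map_add' f g := by funext τ; simp [mul_add]
  map_smul' a f := by
    funext τ
    simp only [Pi.smul_apply, smul_eq_mul, RingHom.id_apply]
    ring

lemma relChain_boundary (K : Type) [Field K] {n : ℕ} (e : Fin n ≃ Fin n)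
    {S S' : Set (Finset (Fin n))}
    (h : ∀ σ : Finset (Fin n), σ ∈ S' ↔ σ.map e.symm.toEmbedding ∈ S) (c : ℕ)
    (f : SimplicialChain K S (c + 1)) :
    simplicialBoundary K S' c (relChain K e h (c + 1) f) =
      relChain K e h c (simplicialBoundary K S c f) := by
  funext τ
  obtain ⟨τ, hτS', hτc⟩ := τ
  simp only [simplicialBoundary, relChain, LinearMap.coe_mk, AddHom.coe_mk]
  rw [Finset.mul_sum]
  conv_lhs => rw [← Equiv.sum_comp e]
  refine Finset.sum_congr rfl fun m _ => ?_
  have f1 : e m ∉ τ ↔ m ∉ τ.map e.symm.toEmbedding := by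
    simp [Finset.mem_map_equiv]
  have f2 : (insert (e m) τ).map e.symm.toEmbedding =
      insert m (τ.map e.symm.toEmbedding) := by
    rw [Finset.map_insert]; simp
  have f3 : insert (e m) τ ∈ S' ↔ insert m (τ.map e.symm.toEmbedding) ∈ S := by
    rw [h, f2]
  by_cases hc : m ∉ τ.map e.symm.toEmbedding ∧ insert m (τ.map e.symm.toEmbedding) ∈ S
  · rw [dif_pos (by rw [f1, f3]; exact hc), dif_pos hc]
    have f4 : (τ.filter (· < e m)).card =
        ((τ.map e.symm.toEmbedding).filter (fun l => e l < e m)).card := by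
      conv_lhs => rw [← map_symm_map e τ]
      rw [Finset.filter_map, Finset.card_map]
      congr 1
    simp only [f2, f4]
    rw [sgn_insert K e _ m hc.1]
    set A : K := (-1) ^ ((τ.map e.symm.toEmbedding).filter (fun l => e l < e m)).card with hA
    set B : K := sgn K e (τ.map e.symm.toEmbedding)
    set C : K := (-1) ^ ((τ.map e.symm.toEmbedding).filter (· < m)).card
    have hA2 : A * A = 1 := by rw [hA, ← pow_add]; exact Even.neg_one_pow ⟨_, rfl⟩
    rw [smul_eq_mul, smul_eq_mul]
    set F : K := f ⟨insert m (τ.map e.symm.toEmbedding), hc.2, by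
      rw [Finset.card_insert_of_notMem hc.1]; simp [hτc]⟩
    linear_combination (B * C * F) * hA2
  · rw [dif_neg (by rw [f1, f3]; exact hc), dif_neg hc, mul_zero]

lemma relChain_mem_cycles (K : Type) [Field K] {n : ℕ} (e : Fin n ≃ Fin n)
    {S S' : Set (Finset (Fin n))}
    (h : ∀ σ : Finset (Fin n), σ ∈ S' ↔ σ.map e.symm.toEmbedding ∈ S) (c : ℕ) :
    ∀ x ∈ simplicialCycles K S c, relChain K e h c x ∈ simplicialCycles K S' c := by
  intro x hx
  cases c with
  | zero => trivial
  | succ d =>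
    have hx' : simplicialBoundary K S d x = 0 := hx
    show simplicialBoundary K S' d (relChain K e h (d + 1) x) = 0
    rw [relChain_boundary K e h d x, hx', map_zero]

/-- The map induced on reduced homology by a relabeling of vertices. -/
noncomputable def relHom (K : Type) [Field K] {n : ℕ} (e : Fin n ≃ Fin n)
    {S S' : Set (Finset (Fin n))}
    (h : ∀ σ : Finset (Fin n), σ ∈ S' ↔ σ.map e.symm.toEmbedding ∈ S) (c : ℕ) :
    reducedHomology K S c →ₗ[K] reducedHomology K S' c :=
  Submodule.mapQ _ _
    (LinearMap.restrict (relChain K e h c) (relChain_mem_cycles K e h c))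
    (by
      intro x hx
      simp only [Submodule.mem_comap, Submodule.coe_subtype, LinearMap.mem_range] at hx ⊢
      obtain ⟨u, hu⟩ := hx
      refine ⟨relChain K e h (c + 1) u, ?_⟩
      have : (LinearMap.restrict (relChain K e h c)
          (relChain_mem_cycles K e h c) x : SimplicialChain K S' c) =
          relChain K e h c (x : SimplicialChain K S c) := rfl
      rw [this, ← hu, relChain_boundary K e h c u])

lemma symm_hyp {n : ℕ} (e : Fin n ≃ Fin n) {S S' : Set (Finset (Fin n))}
    (h : ∀ σ : Finset (Fin n), σ ∈ S' ↔ σ.map e.symm.toEmbedding ∈ S) :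
    ∀ σ : Finset (Fin n), σ ∈ S ↔ σ.map e.symm.symm.toEmbedding ∈ S' := by
  intro σ
  rw [Equiv.symm_symm]
  rw [h (σ.map e.toEmbedding), map_map_symm]

lemma relChain_comp (K : Type) [Field K] {n : ℕ} (e : Fin n ≃ Fin n)
    {S S' : Set (Finset (Fin n))}
    (h : ∀ σ : Finset (Fin n), σ ∈ S' ↔ σ.map e.symm.toEmbedding ∈ S) (c : ℕ)
    (f : SimplicialChain K S c) :
    relChain K e.symm (symm_hyp e h) c (relChain K e h c f) = f := by
  funext σ
  obtain ⟨σ, hσ, hσc⟩ := σ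
  simp only [relChain, LinearMap.coe_mk, AddHom.coe_mk, Equiv.symm_symm, map_map_symm]
  rw [sgn_symm, ← mul_assoc, sgn_mul_self, one_mul]

lemma relChain_comp' (K : Type) [Field K] {n : ℕ} (e : Fin n ≃ Fin n)
    {S S' : Set (Finset (Fin n))}
    (h : ∀ σ : Finset (Fin n), σ ∈ S' ↔ σ.map e.symm.toEmbedding ∈ S) (c : ℕ)
    (f : SimplicialChain K S' c) :
    relChain K e h c (relChain K e.symm (symm_hyp e h) c f) = f := by
  funext σ
  obtain ⟨σ, hσ, hσc⟩ := σ
  simp only [relChain, LinearMap.coe_mk, AddHom.coe_mk, Equiv.symm_symm, map_symm_map]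
  have hs := sgn_symm K e.symm σ
  rw [Equiv.symm_symm] at hs
  rw [hs, ← mul_assoc, sgn_mul_self, one_mul]

lemma finrank_relHomology (K : Type) [Field K] {n : ℕ} (e : Fin n ≃ Fin n)
    {S S' : Set (Finset (Fin n))}
    (h : ∀ σ : Finset (Fin n), σ ∈ S' ↔ σ.map e.symm.toEmbedding ∈ S) (c : ℕ) :
    Module.finrank K (reducedHomology K S' c) = Module.finrank K (reducedHomology K S c) := by
  have e1 : ∀ x, relHom K e.symm (symm_hyp e h) c (relHom K e h c x) = x := by
    intro x
    obtain ⟨y, rfl⟩ := Submodule.Quotient.mk_surjective _ x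
    rw [relHom, relHom, Submodule.mapQ_apply, Submodule.mapQ_apply]
    congr 1
    refine Subtype.ext ?_
    simp only [LinearMap.restrict_apply]
    exact relChain_comp K e h c y.1
  have e2 : ∀ x, relHom K e h c (relHom K e.symm (symm_hyp e h) c x) = x := by
    intro x
    obtain ⟨y, rfl⟩ := Submodule.Quotient.mk_surjective _ x
    rw [relHom, relHom, Submodule.mapQ_apply, Submodule.mapQ_apply]
    congr 1
    refine Subtype.ext ?_
    simp only [LinearMap.restrict_apply]
    exact relChain_comp' K e h c y.1
  exact (LinearEquiv.ofLinear (relHom K e.symm (symm_hyp e h) c) (relHom K e h c)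
    (LinearMap.ext fun x => by
      rw [LinearMap.comp_apply, LinearMap.id_apply]; exact e1 x)
    (LinearMap.ext fun x => by
      rw [LinearMap.comp_apply, LinearMap.id_apply]; exact e2 x)).finrank_eq

lemma cond_symm {n : ℕ} {S : Set (Finset (Fin n))} (hdc : DownClosed S)
    {τ : Finset (Fin n)} {k l : Fin n}
    (h : (k ∉ τ ∧ insert k τ ∈ S) ∧ (l ∉ insert k τ ∧ insert l (insert k τ) ∈ S)) :
    (l ∉ τ ∧ insert l τ ∈ S) ∧ (k ∉ insert l τ ∧ insert k (insert l τ) ∈ S) := by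
  obtain ⟨⟨hk, _⟩, ⟨hl, hlS⟩⟩ := h
  have hlk : l ≠ k := fun hh => hl (hh ▸ Finset.mem_insert_self k τ)
  have hlτ : l ∉ τ := fun hh => hl (Finset.mem_insert_of_mem hh)
  have hcomm : insert k (insert l τ) = insert l (insert k τ) := Finset.insert_comm k l τ
  refine ⟨⟨hlτ, hdc _ hlS _ (Finset.insert_subset_insert _ (Finset.subset_insert _ _))⟩,
    ⟨?_, by rw [hcomm]; exact hlS⟩⟩
  simp only [Finset.mem_insert, not_or]
  exact ⟨fun hh => hlk hh.symm, hk⟩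

open Classical in
/-- The individual terms of the double sum expressing `∂∂f`. -/
noncomputable def dblTerm (K : Type) [Field K] {n : ℕ} (S : Set (Finset (Fin n))) (c : ℕ)
    (f : SimplicialChain K S (c + 2)) (τ : Finset (Fin n)) (hτc : τ.card = c)
    (p : Fin n × Fin n) : K :=
  if h : (p.1 ∉ τ ∧ insert p.1 τ ∈ S) ∧
      (p.2 ∉ insert p.1 τ ∧ insert p.2 (insert p.1 τ) ∈ S) then
    ((-1 : K) ^ ((τ.filter (· < p.1)).card + ((insert p.1 τ).filter (· < p.2)).card)) •
      f ⟨insert p.2 (insert p.1 τ), h.2.2, by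
        rw [Finset.card_insert_of_notMem h.2.1, Finset.card_insert_of_notMem h.1.1, hτc]⟩
  else 0

lemma dblTerm_diag (K : Type) [Field K] {n : ℕ} (S : Set (Finset (Fin n))) (c : ℕ)
    (f : SimplicialChain K S (c + 2)) (τ : Finset (Fin n)) (hτc : τ.card = c) (k : Fin n) :
    dblTerm K S c f τ hτc (k, k) = 0 := by
  rw [dblTerm, dif_neg]
  rintro ⟨-, ⟨hk, -⟩⟩
  exact hk (Finset.mem_insert_self k τ)

lemma dblTerm_swap (K : Type) [Field K] {n : ℕ} {S : Set (Finset (Fin n))}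
    (hdc : DownClosed S) (c : ℕ)
    (f : SimplicialChain K S (c + 2)) (τ : Finset (Fin n)) (hτc : τ.card = c)
    (p : Fin n × Fin n) :
    dblTerm K S c f τ hτc p + dblTerm K S c f τ hτc (p.2, p.1) = 0 := by
  obtain ⟨k, l⟩ := p
  by_cases hkl : k = l
  · subst hkl; simp [dblTerm_diag]
  by_cases h : (k ∉ τ ∧ insert k τ ∈ S) ∧ (l ∉ insert k τ ∧ insert l (insert k τ) ∈ S)
  · have h' := cond_symm hdc h
    rw [dblTerm, dblTerm, dif_pos h, dif_pos h']
    have hcomm : insert k (insert l τ) = insert l (insert k τ) := Finset.insert_comm k l τ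
    simp only [hcomm]
    rw [← add_smul]
    convert zero_smul K _
    have e1 : ((insert k τ).filter (· < l)).card =
        (τ.filter (· < l)).card + if k < l then 1 else 0 := by
      rw [Finset.filter_insert]
      split
      · rw [Finset.card_insert_of_notMem (fun hh => h.1.1 (Finset.mem_of_mem_filter _ hh))]
      · simp
    have e2 : ((insert l τ).filter (· < k)).card =
        (τ.filter (· < k)).card + if l < k then 1 else 0 := by
      rw [Finset.filter_insert]
      split
      · rw [Finset.card_insert_of_notMem (fun hh => h'.1.1 (Finset.mem_of_mem_filter _ hh))]
      · simp
    rw [e1, e2]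
    have key : ∀ x y : ℕ, (-1 : K) ^ (x + (y + 1)) + (-1 : K) ^ (y + (x + 0)) = 0 := by
      intro x y
      simp only [add_zero]
      rw [show x + (y + 1) = (y + x) + 1 from by omega, pow_succ]
      ring
    rcases lt_or_gt_of_ne hkl with hlt | hgt
    · rw [if_pos hlt, if_neg (asymm hlt)]
      exact key _ _
    · rw [if_neg (asymm hgt), if_pos hgt]
      rw [add_comm]
      exact key _ _
  · rw [dblTerm, dblTerm, dif_neg h, dif_neg (fun h' => h (cond_symm hdc h')), add_zero]

lemma boundary_boundary (K : Type) [Field K] {n : ℕ} {S : Set (Finset (Fin n))}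
    (hdc : DownClosed S) (c : ℕ) (f : SimplicialChain K S (c + 2)) :
    simplicialBoundary K S c (simplicialBoundary K S (c + 1) f) = 0 := by
  funext τ
  obtain ⟨τ, hτ, hτc⟩ := τ
  simp only [simplicialBoundary, LinearMap.coe_mk, AddHom.coe_mk, Pi.zero_apply]
  classical
  have step1 : ∀ k : Fin n,
      (if h : k ∉ τ ∧ insert k τ ∈ S then
        ((-1 : K) ^ ((τ.filter (· < k)).card)) •
          (∑ l : Fin n, if h2 : l ∉ insert k τ ∧ insert l (insert k τ) ∈ S then
            ((-1 : K) ^ (((insert k τ).filter (· < l)).card)) •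
              f ⟨insert l (insert k τ), h2.2, by
                rw [Finset.card_insert_of_notMem h2.1, Finset.card_insert_of_notMem h.1, hτc]⟩
          else 0)
      else 0) = ∑ l : Fin n, dblTerm K S c f τ hτc (k, l) := by
    intro k
    by_cases h1 : k ∉ τ ∧ insert k τ ∈ S
    · rw [dif_pos h1, Finset.smul_sum]
      refine Finset.sum_congr rfl fun l _ => ?_
      by_cases h2 : l ∉ insert k τ ∧ insert l (insert k τ) ∈ S
      · rw [dif_pos h2, dblTerm, dif_pos ⟨h1, h2⟩, smul_smul, ← pow_add]
      · rw [dif_neg h2, smul_zero, dblTerm, dif_neg (by tauto)]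
    · rw [dif_neg h1]
      refine (Finset.sum_eq_zero fun l _ => ?_).symm
      rw [dblTerm, dif_neg (by tauto)]
  rw [Finset.sum_congr rfl fun k _ => step1 k, ← Finset.sum_product']
  refine Finset.sum_involution (fun p _ => (p.2, p.1))
    (fun p _ => dblTerm_swap K hdc c f τ hτc p)
    (fun p _ hne => ?_) (fun p _ => Finset.mem_univ _) (fun p _ => rfl)
  intro hswap
  obtain ⟨k, l⟩ := p
  simp only [Prod.mk.injEq] at hswap
  obtain ⟨h3, -⟩ := hswap
  subst h3
  exact hne (dblTerm_diag K S c f τ hτc _)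

lemma extendChain_apply (K : Type) [Field K] {n : ℕ} {Δ' Δ'' : Set (Finset (Fin n))}
    (h : Δ' ⊆ Δ'') (c : ℕ) (f : SimplicialChain K Δ' c)
    (τ : {σ : Finset (Fin n) // σ ∈ Δ'' ∧ σ.card = c}) (hτ : τ.1 ∈ Δ') :
    extendChain K h c f τ = f ⟨τ.1, hτ, τ.2.2⟩ := by
  simp only [extendChain, LinearMap.coe_mk, AddHom.coe_mk, dif_pos hτ]

lemma extendChain_apply_of_not_mem (K : Type) [Field K] {n : ℕ}
    {Δ' Δ'' : Set (Finset (Fin n))}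
    (h : Δ' ⊆ Δ'') (c : ℕ) (f : SimplicialChain K Δ' c)
    (τ : {σ : Finset (Fin n) // σ ∈ Δ'' ∧ σ.card = c}) (hτ : τ.1 ∉ Δ') :
    extendChain K h c f τ = 0 := by
  simp only [extendChain, LinearMap.coe_mk, AddHom.coe_mk, dif_neg hτ]

lemma extendChain_eq_zero (K : Type) [Field K] {n : ℕ} {Δ' Δ'' : Set (Finset (Fin n))}
    (h : Δ' ⊆ Δ'') (c : ℕ) (f : SimplicialChain K Δ' c)
    (hf : extendChain K h c f = 0) : f = 0 := by
  funext σ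
  have := congrFun hf ⟨σ.1, h σ.2.1, σ.2.2⟩
  rw [extendChain_apply K h c f _ σ.2.1] at this
  exact this

lemma mv_exact (K : Type) [Field K] {n : ℕ} {A B : Set (Finset (Fin n))}
    (hA : DownClosed A) (hB : DownClosed B)
    (hAB : DownClosed (A ∩ B)) (c : ℕ)
    (u : reducedHomology K A c) (v : reducedHomology K B c)
    (huv : inducedHomologyMap K Set.subset_union_left hA c u +
           inducedHomologyMap K Set.subset_union_right hB c v = 0) :
    (u, v) ∈ LinearMap.range
      (mayerVietorisMap K (Set.inter_subset_left (t := B)) Set.inter_subset_right hAB c) := by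
  classical
  obtain ⟨a, rfl⟩ := Submodule.Quotient.mk_surjective _ u
  obtain ⟨b, rfl⟩ := Submodule.Quotient.mk_surjective _ v
  rw [inducedHomologyMap, inducedHomologyMap, Submodule.mapQ_apply, Submodule.mapQ_apply,
    ← Submodule.Quotient.mk_add, Submodule.Quotient.mk_eq_zero, Submodule.mem_comap] at huv
  obtain ⟨w, hw⟩ := huv
  -- hw : ∂ w = ext a + ext b  (as chains on A ∪ B)
  have hw' : simplicialBoundary K (A ∪ B) c w =
      extendChain K Set.subset_union_left c a.1 +
        extendChain K Set.subset_union_right c b.1 := hw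
  set wa : SimplicialChain K A (c + 1) := fun σ => w ⟨σ.1, Or.inl σ.2.1, σ.2.2⟩ with hwa
  set wb : SimplicialChain K B (c + 1) :=
    fun σ => if σ.1 ∈ A then 0 else w ⟨σ.1, Or.inr σ.2.1, σ.2.2⟩ with hwb
  have hsplit : w = extendChain K Set.subset_union_left (c + 1) wa +
      extendChain K Set.subset_union_right (c + 1) wb := by
    funext σ
    by_cases hσA : σ.1 ∈ A
    · rw [Pi.add_apply, extendChain_apply K _ _ _ _ hσA]
      by_cases hσB : σ.1 ∈ B
      · rw [extendChain_apply K _ _ _ _ hσB]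
        simp [hwa, hwb, hσA]
      · rw [extendChain_apply_of_not_mem K _ _ _ _ hσB]
        simp [hwa]
    · have hσB : σ.1 ∈ B := σ.2.1.resolve_left hσA
      rw [Pi.add_apply, extendChain_apply_of_not_mem K _ _ _ _ hσA,
        extendChain_apply K _ _ _ _ hσB]
      simp [hwb, hσA]
  set z : SimplicialChain K A c := a.1 - simplicialBoundary K A c wa with hz
  have key : extendChain K Set.subset_union_left c z =
      extendChain K Set.subset_union_right c (simplicialBoundary K B c wb - b.1) := by
    rw [hz, map_sub, map_sub, ← boundary_extendChain K _ hA c wa, ← boundary_extendChain K _ hB c wb]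
    have : simplicialBoundary K (A ∪ B) c (extendChain K Set.subset_union_left (c+1) wa) =
        simplicialBoundary K (A ∪ B) c w -
          simplicialBoundary K (A ∪ B) c (extendChain K Set.subset_union_right (c+1) wb) := by
      rw [hsplit]; simp [map_add]
    rw [this, hw']
    abel
  set y : SimplicialChain K (A ∩ B) c := fun σ => z ⟨σ.1, σ.2.1.1, σ.2.2⟩ with hy
  have hyA : extendChain K (Set.inter_subset_left (t := B)) c y = z := by
    funext σ
    by_cases hσB : σ.1 ∈ B
    · exact extendChain_apply K (Set.inter_subset_left (t := B)) c y σ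
        (Set.mem_inter σ.2.1 hσB)
    · rw [extendChain_apply_of_not_mem K (Set.inter_subset_left (t := B)) c y σ
        (fun hh => hσB (Set.mem_of_mem_inter_right hh))]
      have := congrFun key ⟨σ.1, Or.inl σ.2.1, σ.2.2⟩
      rw [extendChain_apply K Set.subset_union_left c z ⟨σ.1, Or.inl σ.2.1, σ.2.2⟩ σ.2.1,
        extendChain_apply_of_not_mem K Set.subset_union_right c _
          ⟨σ.1, Or.inl σ.2.1, σ.2.2⟩ hσB] at this
      exact this.symm
  have hyB : extendChain K (Set.inter_subset_right (s := A)) c y =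
      simplicialBoundary K B c wb - b.1 := by
    funext σ
    by_cases hσA : σ.1 ∈ A
    · rw [extendChain_apply K (Set.inter_subset_right (s := A)) c y σ
        (Set.mem_inter hσA σ.2.1)]
      have := congrFun key ⟨σ.1, Or.inr σ.2.1, σ.2.2⟩
      rw [extendChain_apply K Set.subset_union_left c z ⟨σ.1, Or.inr σ.2.1, σ.2.2⟩ hσA,
        extendChain_apply K Set.subset_union_right c _
          ⟨σ.1, Or.inr σ.2.1, σ.2.2⟩ σ.2.1] at this
      exact this
    · rw [extendChain_apply_of_not_mem K (Set.inter_subset_right (s := A)) c y σ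
        (fun hh => hσA (Set.mem_of_mem_inter_left hh))]
      have := congrFun key ⟨σ.1, Or.inr σ.2.1, σ.2.2⟩
      rw [extendChain_apply_of_not_mem K Set.subset_union_left c z
          ⟨σ.1, Or.inr σ.2.1, σ.2.2⟩ hσA,
        extendChain_apply K Set.subset_union_right c _
          ⟨σ.1, Or.inr σ.2.1, σ.2.2⟩ σ.2.1] at this
      exact this
  have hacyc : ∀ d (hd : c = d + 1), True := fun _ _ => trivial
  have hycyc : y ∈ simplicialCycles K (A ∩ B) c := by
    cases c with
    | zero => trivial
    | succ d =>
      show simplicialBoundary K (A ∩ B) d y = 0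
      have hz0 : simplicialBoundary K A d z = 0 := by
        rw [hz, map_sub]
        have ha0 : simplicialBoundary K A d a.1 = 0 := a.2
        rw [ha0, boundary_boundary K hA d wa, sub_zero]
      have : extendChain K (Set.inter_subset_left (t := B)) d
          (simplicialBoundary K (A ∩ B) d y) = 0 := by
        rw [← boundary_extendChain K _ hAB, hyA, hz0]
      exact extendChain_eq_zero K _ _ _ this
  refine ⟨Submodule.Quotient.mk ⟨y, hycyc⟩, ?_⟩
  rw [mayerVietorisMap]
  simp only [LinearMap.prod_apply, Function.prod, LinearMap.neg_apply]
  rw [inducedHomologyMap, inducedHomologyMap, Submodule.mapQ_apply, Submodule.mapQ_apply]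
  have hXA : (((LinearMap.restrict (extendChain K (Set.inter_subset_left (t := B)) c)
      (extend_mem_cycles K _ hAB c)) ⟨y, hycyc⟩ : simplicialCycles K A c) :
      SimplicialChain K A c) = z := hyA
  have hXB : (((LinearMap.restrict (extendChain K (Set.inter_subset_right (s := A)) c)
      (extend_mem_cycles K _ hAB c)) ⟨y, hycyc⟩ : simplicialCycles K B c) :
      SimplicialChain K B c) = simplicialBoundary K B c wb - b.1 := hyB
  refine Prod.ext ?_ ?_
  · show Submodule.Quotient.mk _ = Submodule.Quotient.mk a
    rw [Submodule.Quotient.eq, Submodule.mem_comap]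
    refine ⟨-wa, ?_⟩
    rw [map_neg, map_sub, Submodule.subtype_apply, Submodule.subtype_apply, hXA, hz]
    abel
  · show -(Submodule.Quotient.mk _) = Submodule.Quotient.mk b
    rw [← Submodule.Quotient.mk_neg _, Submodule.Quotient.eq, Submodule.mem_comap]
    refine ⟨-wb, ?_⟩
    rw [map_neg, map_sub, map_neg, Submodule.subtype_apply, Submodule.subtype_apply, hXB]
    abel
set_option synthInstance.maxHeartbeats 1000000
set_option maxHeartbeats 1000000

instance simplicialChain_finite (K : Type) [Field K] {n : ℕ} (S : Set (Finset (Fin n)))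
    (c : ℕ) : Module.Finite K (SimplicialChain K S c) :=
  Module.Finite.pi

noncomputable instance reducedHomology_fd (K : Type) [Field K] {n : ℕ}
    (S : Set (Finset (Fin n))) (c : ℕ) : Module.Finite K (reducedHomology K S c) :=
  inferInstance

lemma mv_finrank (K : Type) [Field K] {n : ℕ} {A B : Set (Finset (Fin n))}
    (hA : DownClosed A) (hB : DownClosed B) (hAB : DownClosed (A ∩ B)) (c : ℕ) :
    Module.finrank K (reducedHomology K A c × reducedHomology K B c) ≤
      Module.finrank K (reducedHomology K (A ∩ B) c) +
        Module.finrank K (reducedHomology K (A ∪ B) c) := by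
  classical
  set g : reducedHomology K A c × reducedHomology K B c →ₗ[K] reducedHomology K (A ∪ B) c :=
    LinearMap.coprod (inducedHomologyMap K Set.subset_union_left hA c)
      (inducedHomologyMap K Set.subset_union_right hB c) with hg
  have hker : LinearMap.ker g ≤ LinearMap.range
      (mayerVietorisMap K (Set.inter_subset_left (t := B)) Set.inter_subset_right hAB c) := by
    rintro ⟨u, v⟩ hk
    refine mv_exact K hA hB hAB c u v ?_
    simpa [hg, LinearMap.coprod_apply] using hk
  calc Module.finrank K (reducedHomology K A c × reducedHomology K B c)
      = Module.finrank K (LinearMap.range g) + Module.finrank K (LinearMap.ker g) :=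
        (LinearMap.finrank_range_add_finrank_ker g).symm
    _ ≤ Module.finrank K (reducedHomology K (A ∪ B) c) +
        Module.finrank K (reducedHomology K (A ∩ B) c) := by
        refine add_le_add (Submodule.finrank_le _) ?_
        refine le_trans (Submodule.finrank_mono hker) ?_
        exact LinearMap.finrank_range_le _
    _ = _ := by rw [add_comm]

lemma map_swap_left {n : ℕ} {i j : Fin n} (hij : i ≠ j) {σ : Finset (Fin n)}
    (hiσ : i ∈ σ) (hjσ : j ∉ σ) :
    σ.map (Equiv.swap i j).toEmbedding = insert j (σ.erase i) := by
  ext a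
  simp only [Finset.mem_map_equiv, Equiv.symm_swap, Finset.mem_insert, Finset.mem_erase]
  rcases eq_or_ne a j with rfl | haj
  · simp [Equiv.swap_apply_right, hiσ]
  · rcases eq_or_ne a i with rfl | hai
    · simp [Equiv.swap_apply_left, hjσ, haj, hij]
    · rw [Equiv.swap_apply_of_ne_of_ne hai haj]
      simp [haj, hai]

lemma map_swap_none {n : ℕ} {i j : Fin n} {σ : Finset (Fin n)}
    (hiσ : i ∉ σ) (hjσ : j ∉ σ) :
    σ.map (Equiv.swap i j).toEmbedding = σ := by
  ext a
  simp only [Finset.mem_map_equiv, Equiv.symm_swap]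
  rcases eq_or_ne a i with rfl | hai
  · simp [Equiv.swap_apply_left, hjσ, hiσ]
  · rcases eq_or_ne a j with rfl | haj
    · simp [Equiv.swap_apply_right, hiσ, hjσ]
    · rw [Equiv.swap_apply_of_ne_of_ne hai haj]

lemma map_swap_right {n : ℕ} {i j : Fin n} (hij : i ≠ j) {σ : Finset (Fin n)}
    (hjσ : j ∈ σ) (hiσ : i ∉ σ) :
    σ.map (Equiv.swap i j).toEmbedding = insert i (σ.erase j) := by
  rw [Equiv.swap_comm]
  exact map_swap_left hij.symm hjσ hiσ

lemma mem_mapC_swap {n : ℕ} (i j : Fin n) (S : Set (Finset (Fin n))) (σ : Finset (Fin n)) :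
    σ ∈ mapC (Equiv.swap i j) S ↔ σ.map (Equiv.swap i j).toEmbedding ∈ S := by
  rw [mem_mapC, Equiv.symm_swap]

lemma downClosed_restrictC {n : ℕ} {Δ : Set (Finset (Fin n))} (hΔ : DownClosed Δ)
    (W : Finset (Fin n)) : DownClosed (restrictC Δ W) := by
  rintro σ ⟨hσ, hσW⟩ τ hτ
  exact ⟨hΔ _ hσ _ hτ, hτ.trans hσW⟩

lemma downClosed_mapC {n : ℕ} {S : Set (Finset (Fin n))} (hS : DownClosed S)
    (e : Fin n ≃ Fin n) : DownClosed (mapC e S) := by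
  intro σ hσ τ hτ
  rw [mem_mapC] at hσ ⊢
  exact hS _ hσ _ (Finset.map_subset_map.mpr hτ)

lemma downClosed_inter {n : ℕ} {A B : Set (Finset (Fin n))} (hA : DownClosed A)
    (hB : DownClosed B) : DownClosed (A ∩ B) :=
  fun σ hσ τ hτ => ⟨hA _ hσ.1 _ hτ, hB _ hσ.2 _ hτ⟩

lemma map_swap_map_swap {n : ℕ} (i j : Fin n) (σ : Finset (Fin n)) :
    (σ.map (Equiv.swap i j).toEmbedding).map (Equiv.swap i j).toEmbedding = σ := by
  have h := map_symm_map (Equiv.swap i j) σ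
  rwa [Equiv.symm_swap] at h

lemma identity1 {n : ℕ} {Δ : Set (Finset (Fin n))} {i j : Fin n} (hij : i ≠ j)
    {W : Finset (Fin n)} (hiW : i ∉ W) (hjW : j ∉ W) :
    restrictC (shiftOp Δ i j) (insert i W) =
      restrictC Δ (insert i W) ∩ mapC (Equiv.swap i j) (restrictC Δ (insert j W)) := by
  have hjiW : j ∉ insert i W := by simp [Finset.mem_insert, hij.symm, hjW]
  ext σ
  constructor
  · rintro ⟨⟨τ, hτ, hshift⟩, hσW⟩
    have hjσ : j ∉ σ := fun h => hjiW (hσW h)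
    by_cases hc : i ∈ τ ∧ j ∉ τ ∧ insert j (τ.erase i) ∉ Δ
    · rw [shiftFace, if_pos hc] at hshift
      exact absurd (hshift ▸ Finset.mem_insert_self j (τ.erase i)) hjσ
    · rw [shiftFace, if_neg hc] at hshift
      rw [hshift] at hτ hc
      refine ⟨⟨hτ, hσW⟩, ?_⟩
      rw [mem_mapC_swap]
      by_cases hiσ : i ∈ σ
      · rw [map_swap_left hij hiσ hjσ]
        have hins : insert j (σ.erase i) ∈ Δ := by
          by_contra hnot
          exact hc ⟨hiσ, hjσ, hnot⟩
        refine ⟨hins, Finset.insert_subset_insert _ fun a ha => ?_⟩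
        obtain ⟨hai, haσ⟩ := Finset.mem_erase.mp ha
        rcases Finset.mem_insert.mp (hσW haσ) with h | h
        · exact absurd h hai
        · exact h
      · rw [map_swap_none hiσ hjσ]
        refine ⟨hτ, fun a ha => Finset.mem_insert_of_mem ?_⟩
        rcases Finset.mem_insert.mp (hσW ha) with h | h
        · exact absurd (h ▸ ha) hiσ
        · exact h
  · rintro ⟨⟨hσΔ, hσW⟩, hmap⟩
    rw [mem_mapC_swap] at hmap
    have hjσ : j ∉ σ := fun h => hjiW (hσW h)
    refine ⟨⟨σ, hσΔ, ?_⟩, hσW⟩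
    have hcond : ¬(i ∈ σ ∧ j ∉ σ ∧ insert j (σ.erase i) ∉ Δ) := by
      by_cases hiσ : i ∈ σ
      · rw [map_swap_left hij hiσ hjσ] at hmap
        rintro ⟨-, -, hnot⟩
        exact hnot hmap.1
      · rintro ⟨hi', -⟩
        exact hiσ hi'
    rw [shiftFace, if_neg hcond]

lemma identity2 {n : ℕ} {Δ : Set (Finset (Fin n))} {i j : Fin n} (hij : i ≠ j)
    {W : Finset (Fin n)} (hiW : i ∉ W) (hjW : j ∉ W) :
    mapC (Equiv.swap i j) (restrictC (shiftOp Δ i j) (insert j W)) =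
      restrictC Δ (insert i W) ∪ mapC (Equiv.swap i j) (restrictC Δ (insert j W)) := by
  have hjiW : j ∉ insert i W := by simp [Finset.mem_insert, hij.symm, hjW]
  have hijW : i ∉ insert j W := by simp [Finset.mem_insert, hij, hiW]
  ext σ
  rw [Set.mem_union, mem_mapC_swap, mem_mapC_swap]
  constructor
  · rintro ⟨⟨τ, hτ, hshift⟩, hρW⟩
    by_cases hc : i ∈ τ ∧ j ∉ τ ∧ insert j (τ.erase i) ∉ Δ
    · rw [shiftFace, if_pos hc] at hshift
      left
      have hσ : σ = (insert j (τ.erase i)).map (Equiv.swap i j).toEmbedding := by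
        rw [hshift, map_swap_map_swap]
      have hjmem : j ∈ insert j (τ.erase i) := Finset.mem_insert_self _ _
      have himem : i ∉ insert j (τ.erase i) := by
        simp [Finset.mem_insert, hij, Finset.notMem_erase]
      have hjer : j ∉ τ.erase i := fun h => hc.2.1 (Finset.mem_of_mem_erase h)
      rw [map_swap_right hij hjmem himem, Finset.erase_insert hjer,
        Finset.insert_erase hc.1] at hσ
      rw [← hσ] at hτ hshift hc
      refine ⟨hτ, fun a haτ => ?_⟩
      rcases eq_or_ne a i with rfl | hai
      · exact Finset.mem_insert_self _ _
      · have h1 : a ∈ insert j (σ.erase i) :=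
          Finset.mem_insert_of_mem (Finset.mem_erase.mpr ⟨hai, haτ⟩)
        rw [hshift] at h1
        rcases Finset.mem_insert.mp (hρW h1) with h | h
        · exact absurd (h ▸ haτ) hc.2.1
        · exact Finset.mem_insert_of_mem h
    · rw [shiftFace, if_neg hc] at hshift
      right
      exact ⟨hshift ▸ hτ, hρW⟩
  · rintro (⟨hσΔ, hσW⟩ | ⟨hρΔ, hρW⟩)
    · have hjσ : j ∉ σ := fun h => hjiW (hσW h)
      by_cases hiσ : i ∈ σ
      · rw [map_swap_left hij hiσ hjσ]
        have hsub : σ.erase i ⊆ W := by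
          intro a ha
          obtain ⟨hai, haσ⟩ := Finset.mem_erase.mp ha
          rcases Finset.mem_insert.mp (hσW haσ) with h | h
          · exact absurd h hai
          · exact h
        refine ⟨?_, Finset.insert_subset_insert _ hsub⟩
        by_cases hρΔ : insert j (σ.erase i) ∈ Δ
        · refine ⟨insert j (σ.erase i), hρΔ, ?_⟩
          rw [shiftFace, if_neg]
          rintro ⟨hi', -⟩
          simp [Finset.mem_insert, hij, Finset.notMem_erase] at hi'
        · exact ⟨σ, hσΔ, by rw [shiftFace, if_pos ⟨hiσ, hjσ, hρΔ⟩]⟩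
      · rw [map_swap_none hiσ hjσ]
        refine ⟨⟨σ, hσΔ, by rw [shiftFace, if_neg (fun h => hiσ h.1)]⟩,
          fun a ha => Finset.mem_insert_of_mem ?_⟩
        rcases Finset.mem_insert.mp (hσW ha) with h | h
        · exact absurd (h ▸ ha) hiσ
        · exact h
    · have hiρ : i ∉ σ.map (Equiv.swap i j).toEmbedding := fun h => hijW (hρW h)
      exact ⟨⟨σ.map (Equiv.swap i j).toEmbedding, hρΔ,
        by rw [shiftFace, if_neg (fun h => hiρ h.1)]⟩, hρW⟩
set_option synthInstance.maxHeartbeats 1000000 in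
/-- **Inequality (10).** Let `Δ` be a simplicial complex on `[n]`, `1 ≤ i < j ≤ n`,
`Γ = Shift_{ij}(Δ)` and `W ⊆ [n]∖{i,j}`. With `Δ₁ = Δ_{W∪{i}}`, `Δ₂ = Δ_{W∪{j}}`,
`Γ₁ = Γ_{W∪{i}}`, `Γ₂ = Γ_{W∪{j}}`, for all `k` one has
`dim_K (H̃_k(Δ₁;K) ⊕ H̃_k(Δ₂;K)) ≤ dim_K (H̃_k(Γ₁;K) ⊕ H̃_k(Γ₂;K))`. -/
theorem finrank_sum_reducedHomology_le (K : Type) [Field K] (n : ℕ)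
    (Δ : Set (Finset (Fin n))) (hΔ : IsSimplicialComplex Δ)
    (i j : Fin n) (hij : i < j) (W : Finset (Fin n)) (hiW : i ∉ W) (hjW : j ∉ W)
    (c : ℕ) :
    Module.finrank K ((reducedHomology K (restrictC Δ (insert i W)) c) ×
        (reducedHomology K (restrictC Δ (insert j W)) c)) ≤
      Module.finrank K ((reducedHomology K (restrictC (shiftOp Δ i j) (insert i W)) c) ×
        (reducedHomology K (restrictC (shiftOp Δ i j) (insert j W)) c)) := by
  classical
  have hne : i ≠ j := ne_of_lt hij
  have hdcΔ : DownClosed Δ := hΔ.2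
  have hdcA : DownClosed (restrictC Δ (insert i W)) := downClosed_restrictC hdcΔ _
  have hdcB2 : DownClosed (restrictC Δ (insert j W)) := downClosed_restrictC hdcΔ _
  have hdcB : DownClosed (mapC (Equiv.swap i j) (restrictC Δ (insert j W))) :=
    downClosed_mapC hdcB2 _
  have hdcAB : DownClosed (restrictC Δ (insert i W) ∩
      mapC (Equiv.swap i j) (restrictC Δ (insert j W))) := downClosed_inter hdcA hdcB
  have hI1 := identity1 (Δ := Δ) hne hiW hjW
  have hI2 := identity2 (Δ := Δ) hne hiW hjW
  have hB : Module.finrank K (reducedHomology K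
        (mapC (Equiv.swap i j) (restrictC Δ (insert j W))) c) =
      Module.finrank K (reducedHomology K (restrictC Δ (insert j W)) c) :=
    finrank_relHomology K (Equiv.swap i j) (mem_mapC _ _) c
  have hG2 : Module.finrank K (reducedHomology K
        (mapC (Equiv.swap i j) (restrictC (shiftOp Δ i j) (insert j W))) c) =
      Module.finrank K (reducedHomology K (restrictC (shiftOp Δ i j) (insert j W)) c) :=
    finrank_relHomology K (Equiv.swap i j) (mem_mapC _ _) c
  have hmv := mv_finrank K hdcA hdcB hdcAB c
  rw [Module.finrank_prod] at hmv
  rw [Module.finrank_prod, Module.finrank_prod, hI1, ← hG2, hI2, ← hB]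
  exact hmv
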